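/- Let m ≥ 1, let f : ℝ^m → ℝ^m be C² and homogeneous of degree 5, let R > 0 and θ ∈ ℝ^m. Let u, v : (R, ∞) → ℝ^m be two C² functions satisfying u''(r) + (2/r) u'(r) + f(u(r)) = 0 and v''(r) + (2/r) v'(r) + f(v(r)) = 0 on (R, ∞), and assume lim_{r→∞} r·u(r) = θ and lim_{r→∞} r·v(r) = θ. Then u(r) = v(r) for all r ∈ (R, ∞). -/

import Mathlib

open Set Filter

variable {E : Type*} [NormedAddCommGroup E] [NormedSpace ℝ E]

theorem fderiv_scale {f : E → E} (hf : ContDiff ℝ 2 f)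
    (hhom : ∀ c : ℝ, 0 ≤ c → ∀ x, f (c • x) = c ^ 5 • f x)
    {c : ℝ} (hc : 0 < c) (x : E) :
    fderiv ℝ f (c • x) = c ^ 4 • fderiv ℝ f x := by
  have hd : Differentiable ℝ f := hf.differentiable (by norm_num)
  have h1 : HasFDerivAt (fun y => f (c • y)) (c • fderiv ℝ f (c • x)) x := by
    have := (hd (c • x)).hasFDerivAt.comp x
      ((hasFDerivAt_id x).const_smul c)
    convert this using 1
    ext y
    simp [ContinuousLinearMap.smul_apply]
    ext y
    simp [ContinuousLinearMap.smul_apply]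
  have h2 : HasFDerivAt (fun y => f (c • y)) (c ^ 5 • fderiv ℝ f x) x := by
    exact ((hd x).hasFDerivAt.const_smul (c ^ 5)).congr_of_eventuallyEq
      (Eventually.of_forall fun y => (hhom c hc.le y))
    
  have h3 := h1.unique h2
  have : fderiv ℝ f (c • x) = c⁻¹ • (c • fderiv ℝ f (c • x)) := by
    rw [smul_smul, inv_mul_cancel₀ hc.ne', one_smul]
  rw [this, h3, smul_smul]
  ring_nf
  congr 1
  field_simp

theorem fderiv_zero' {f : E → E} (hf : ContDiff ℝ 2 f)
    (hhom : ∀ c : ℝ, 0 ≤ c → ∀ x, f (c • x) = c ^ 5 • f x) :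
    fderiv ℝ f 0 = 0 := by
  have h := fderiv_scale hf hhom (c := 2) (by norm_num) (0 : E)
  rw [smul_zero] at h
  have : ((2 : ℝ) ^ 4 - 1) • fderiv ℝ f 0 = 0 := by
    rw [sub_smul, one_smul, ← h, sub_self]
  have h15 : ((2:ℝ)^4 - 1) ≠ 0 := by norm_num
  simpa [h15] using smul_eq_zero.mp this

theorem fderiv_bound [ProperSpace E] {f : E → E} (hf : ContDiff ℝ 2 f)
    (hhom : ∀ c : ℝ, 0 ≤ c → ∀ x, f (c • x) = c ^ 5 • f x) :
    ∃ C : ℝ, 0 ≤ C ∧ ∀ x, ‖fderiv ℝ f x‖ ≤ C * ‖x‖ ^ 4 := by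
  have hcont : Continuous (fun x => ‖fderiv ℝ f x‖) :=
    (hf.continuous_fderiv (by norm_num)).norm
  have hcpt : IsCompact (Metric.closedBall (0 : E) 1) := isCompact_closedBall 0 1
  obtain ⟨C, hC⟩ := hcpt.exists_bound_of_continuousOn hcont.continuousOn
  refine ⟨max C 0, le_max_right _ _, fun x => ?_⟩
  rcases eq_or_ne x 0 with rfl | hx
  · rw [fderiv_zero' hf hhom]
    simp
  · have hn : (0:ℝ) < ‖x‖ := norm_pos_iff.mpr hx
    have hxu : ‖x‖⁻¹ • x ∈ Metric.closedBall (0 : E) 1 := by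
      simp [norm_smul, abs_of_pos (inv_pos.mpr hn), inv_mul_cancel₀ hn.ne']
    have hsc := fderiv_scale hf hhom hn (‖x‖⁻¹ • x)
    rw [smul_smul, mul_inv_cancel₀ hn.ne', one_smul] at hsc
    calc ‖fderiv ℝ f x‖ = ‖x‖ ^ 4 * ‖fderiv ℝ f (‖x‖⁻¹ • x)‖ := by
          rw [hsc, norm_smul]
          simp [abs_of_pos (pow_pos hn 4)]
      _ ≤ ‖x‖ ^ 4 * max C 0 := by
          gcongr
          exact le_max_of_le_left (by simpa using hC _ hxu)
      _ = max C 0 * ‖x‖ ^ 4 := by ring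

theorem f_lip [ProperSpace E] {f : E → E} (hf : ContDiff ℝ 2 f)
    (hhom : ∀ c : ℝ, 0 ≤ c → ∀ x, f (c • x) = c ^ 5 • f x) :
    ∃ C : ℝ, 0 ≤ C ∧ ∀ x y : E, ‖f x - f y‖ ≤ C * (max ‖x‖ ‖y‖) ^ 4 * ‖x - y‖ := by
  obtain ⟨C, hC0, hC⟩ := fderiv_bound hf hhom
  refine ⟨C, hC0, fun x y => ?_⟩
  set ρ := max ‖x‖ ‖y‖ with hρ
  have hconv : Convex ℝ (Metric.closedBall (0 : E) ρ) := convex_closedBall _ _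
  have := hconv.norm_image_sub_le_of_norm_fderiv_le
    (f := f) (x := y) (y := x)
    (fun z _ => (hf.differentiable (by norm_num)).differentiableAt)
    (C := C * ρ ^ 4) (fun z hz => by
      calc ‖fderiv ℝ f z‖ ≤ C * ‖z‖ ^ 4 := hC z
        _ ≤ C * ρ ^ 4 := by
            have hz' : ‖z‖ ≤ ρ := by simpa using hz
            have hρ0 : (0:ℝ) ≤ ρ := (norm_nonneg x).trans (le_max_left _ _)
            gcongr)
    (by simpa [hρ] using le_max_right ‖x‖ ‖y‖)
    (by simpa [hρ] using le_max_left ‖x‖ ‖y‖)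
  simpa using this

set_option linter.unnecessarySimpa false

theorem deriv_lim_zero [CompleteSpace E] {z z' : ℝ → E} {a : ℝ} {L : E}
    (hd : ∀ t ∈ Ici a, HasDerivAt z (z' t) t)
    (hc : ContinuousOn z' (Ici a))
    (hz : Tendsto z atTop (nhds 0))
    (hz' : Tendsto z' atTop (nhds L)) : L = 0 := by
  have key : ∀ ε : ℝ, 0 < ε → ‖L‖ ≤ ε := by
    intro ε hε
    have h2 : ∀ᶠ s in atTop, ‖z' s - L‖ ≤ ε := by
      have hn := (hz'.sub_const L).norm
      rw [sub_self, norm_zero] at hn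
      exact hn.eventually_le_const hε
    obtain ⟨N, hN⟩ := eventually_atTop.mp h2
    have h3 : ∀ᶠ b in atTop, ‖z (b + 1) - z b - L‖ ≤ ε := by
      filter_upwards [eventually_ge_atTop a, eventually_ge_atTop N] with b hba hbN
      have hsub : Icc b (b + 1) ⊆ Ici a := fun s hs => hba.trans hs.1
      have hint : IntervalIntegrable z' MeasureTheory.volume b (b + 1) :=
        (hc.mono hsub).intervalIntegrable_of_Icc (by linarith)
      have hftc : ∫ s in b..(b+1), z' s = z (b + 1) - z b := by
        apply intervalIntegral.integral_eq_sub_of_hasDerivAt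
        · intro s hs
          rw [uIcc_of_le (by linarith)] at hs
          exact hd s (hsub hs)
        · exact hint
      have hftc2 : ∫ s in b..(b+1), (z' s - L) = z (b + 1) - z b - L := by
        rw [intervalIntegral.integral_sub hint intervalIntegrable_const, hftc,
          intervalIntegral.integral_const]
        norm_num
      have hbnd : ‖∫ s in b..(b+1), (z' s - L)‖ ≤ ε * |(b+1) - b| := by
        apply intervalIntegral.norm_integral_le_of_norm_le_const
        intro x hx
        rw [uIoc_of_le (by linarith)] at hx
        exact hN x (hbN.trans hx.1.le)
      rw [hftc2] at hbnd
      simpa using hbnd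
    have hlim : Tendsto (fun b => ‖z (b + 1) - z b - L‖) atTop (nhds ‖L‖) := by
      have h4 : Tendsto (fun b : ℝ => z (b + 1)) atTop (nhds 0) :=
        hz.comp (tendsto_atTop_add_const_right _ _ tendsto_id)
      have := ((h4.sub hz).sub_const L).norm
      simpa using this
    exact le_of_tendsto hlim h3
  by_contra hL
  have h0 : 0 < ‖L‖ := norm_pos_iff.mpr hL
  have := key (‖L‖ / 2) (by linarith)
  linarith

open MeasureTheory in
theorem decay_step [CompleteSpace E] {z z' z'' : ℝ → E} {ρ D : ℝ}
    (hρ : 0 < ρ) (hD : 0 ≤ D)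
    (hd1 : ∀ t ∈ Ici ρ, HasDerivAt z (z' t) t)
    (hd2 : ∀ t ∈ Ici ρ, HasDerivAt z' (z'' t) t)
    (hc2 : ContinuousOn z'' (Ici ρ))
    (hz : Tendsto z atTop (nhds 0))
    (hb : ∀ s ∈ Ici ρ, ‖z'' s‖ ≤ D * s ^ (-4 : ℝ)) :
    ∀ r ∈ Ici ρ, ‖z r‖ ≤ D * r ^ (-2 : ℝ) / 6 := by
  have hc1 : ContinuousOn z' (Ici ρ) :=
    fun t ht => (hd2 t ht).continuousAt.continuousWithinAt
  -- integrability of z'' on tails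
  have hint2 : ∀ r ∈ Ici ρ, IntegrableOn z'' (Ioi r) := by
    intro r hr
    have hrpos : 0 < r := hρ.trans_le hr
    have hsub : Ioi r ⊆ Ici ρ := fun s hs => mem_Ici.mpr (le_trans hr (le_of_lt hs))
    refine Integrable.mono' (g := fun s => D * s ^ (-4 : ℝ))
      (((integrableOn_Ioi_rpow_of_lt (by norm_num) hrpos)).const_mul D)
      ((hc2.mono hsub).aestronglyMeasurable measurableSet_Ioi) ?_
    rw [ae_restrict_iff' measurableSet_Ioi]
    exact Eventually.of_forall fun s hs => hb s (hsub hs)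
  -- the tail integral of s^(-4)
  have hi4 : ∀ r : ℝ, 0 < r → ∫ s in Ioi r, D * s ^ (-4 : ℝ) = D * (r ^ (-3 : ℝ) / 3) := by
    intro r hrpos
    rw [integral_const_mul, integral_Ioi_rpow_of_lt (by norm_num) hrpos]
    norm_num
  -- z' tends to some limit
  have hftc : ∀ b ∈ Ici ρ, ∫ s in ρ..b, z'' s = z' b - z' ρ := by
    intro b hb'
    apply intervalIntegral.integral_eq_sub_of_hasDerivAt
    · intro s hs
      rw [uIcc_of_le hb'] at hs
      exact hd2 s (mem_Ici.mpr hs.1)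
    · exact (hc2.mono (Icc_subset_Ici_self)).intervalIntegrable_of_Icc hb'
  have hz'tend : Tendsto z' atTop (nhds (z' ρ + ∫ s in Ioi ρ, z'' s)) := by
    have h1 : Tendsto (fun b => z' ρ + ∫ s in ρ..b, z'' s) atTop
        (nhds (z' ρ + ∫ s in Ioi ρ, z'' s)) :=
      tendsto_const_nhds.add
        (intervalIntegral_tendsto_integral_Ioi ρ (hint2 ρ self_mem_Ici) tendsto_id)
    refine h1.congr' ?_
    filter_upwards [eventually_ge_atTop ρ] with b hb'
    rw [hftc b hb']
    abel
  have hL0 : z' ρ + ∫ s in Ioi ρ, z'' s = 0 := deriv_lim_zero hd1 hc1 hz hz'tend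
  rw [hL0] at hz'tend
  -- z' r = -∫_{Ioi r} z''  and its bound
  have hbd1 : ∀ r ∈ Ici ρ, ‖z' r‖ ≤ D * (r ^ (-3 : ℝ) / 3) := by
    intro r hr
    have hrpos : 0 < r := hρ.trans_le hr
    have key : ∫ s in Ioi r, z'' s = 0 - z' r :=
      integral_Ioi_of_hasDerivAt_of_tendsto'
        (fun x hx => hd2 x (mem_Ici.mpr (le_trans hr hx))) (hint2 r hr) hz'tend
    have : ‖z' r‖ = ‖∫ s in Ioi r, z'' s‖ := by rw [key]; simp
    rw [this, ← hi4 r hrpos]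
    refine norm_integral_le_of_norm_le
      (((integrableOn_Ioi_rpow_of_lt (by norm_num) hrpos)).const_mul D) ?_
    rw [ae_restrict_iff' measurableSet_Ioi]
    exact Eventually.of_forall fun s hs => hb s (mem_Ici.mpr (le_trans hr (le_of_lt hs)))
  -- integrability of z' on tails
  have hi3 : ∀ r : ℝ, 0 < r → ∫ s in Ioi r, D * (s ^ (-3 : ℝ) / 3) = D * r ^ (-2 : ℝ) / 6 := by
    intro r hrpos
    have : (fun s : ℝ => D * (s ^ (-3 : ℝ) / 3)) = fun s : ℝ => (D / 3) * s ^ (-3 : ℝ) := by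
      funext s; ring
    rw [this, integral_const_mul, integral_Ioi_rpow_of_lt (by norm_num) hrpos]
    norm_num
    ring
  intro r hr
  have hrpos : 0 < r := hρ.trans_le hr
  have hint1 : IntegrableOn z' (Ioi r) := by
    have hsub : Ioi r ⊆ Ici ρ := fun s hs => mem_Ici.mpr (le_trans hr (le_of_lt hs))
    have : IntegrableOn (fun s : ℝ => (D / 3) * s ^ (-3 : ℝ)) (Ioi r) :=
      ((integrableOn_Ioi_rpow_of_lt (by norm_num) hrpos)).const_mul (D / 3)
    refine Integrable.mono' this
      ((hc1.mono hsub).aestronglyMeasurable measurableSet_Ioi) ?_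
    rw [ae_restrict_iff' measurableSet_Ioi]
    refine Eventually.of_forall fun s hs => (hbd1 s (hsub hs)).trans (le_of_eq (by ring))
  have key2 : ∫ s in Ioi r, z' s = 0 - z r :=
    integral_Ioi_of_hasDerivAt_of_tendsto'
      (fun x hx => hd1 x (mem_Ici.mpr (le_trans hr hx))) hint1 hz
  have : ‖z r‖ = ‖∫ s in Ioi r, z' s‖ := by rw [key2]; simp
  rw [this, ← hi3 r hrpos]
  refine norm_integral_le_of_norm_le ?_ ?_
  · have : (fun s : ℝ => D * (s ^ (-3 : ℝ) / 3)) = fun s : ℝ => (D / 3) * s ^ (-3 : ℝ) := by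
      funext s; ring
    rw [this]
    exact ((integrableOn_Ioi_rpow_of_lt (by norm_num) hrpos)).const_mul (D / 3)
  · rw [ae_restrict_iff' measurableSet_Ioi]
    exact Eventually.of_forall fun s hs => hbd1 s (mem_Ici.mpr (le_trans hr (le_of_lt hs)))


set_option maxHeartbeats 2000000 in
/-- Uniqueness part of Proposition 3.1: a radial stationary solution on `(R,∞)` is
determined by its asymptotic profile `θ/r` at infinity. -/
theorem stmt2 (m : ℕ) (hm : 1 ≤ m)
    (f : EuclideanSpace ℝ (Fin m) → EuclideanSpace ℝ (Fin m))
    (hf : ContDiff ℝ 2 f)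
    (hhom : ∀ c : ℝ, 0 ≤ c → ∀ x, f (c • x) = c ^ 5 • f x)
    (R : ℝ) (hR : 0 < R) (θ : EuclideanSpace ℝ (Fin m))
    (u u' u'' v v' v'' : ℝ → EuclideanSpace ℝ (Fin m))
    (hud : ∀ r ∈ Ioi R, HasDerivAt u (u' r) r)
    (hud' : ∀ r ∈ Ioi R, HasDerivAt u' (u'' r) r)
    (hu'' : ContinuousOn u'' (Ioi R))
    (huode : ∀ r ∈ Ioi R, u'' r + (2 / r) • u' r + f (u r) = 0)
    (hvd : ∀ r ∈ Ioi R, HasDerivAt v (v' r) r)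
    (hvd' : ∀ r ∈ Ioi R, HasDerivAt v' (v'' r) r)
    (hv'' : ContinuousOn v'' (Ioi R))
    (hvode : ∀ r ∈ Ioi R, v'' r + (2 / r) • v' r + f (v r) = 0)
    (hulim : Tendsto (fun r : ℝ => r • u r) atTop (nhds θ))
    (hvlim : Tendsto (fun r : ℝ => r • v r) atTop (nhds θ)) :
    ∀ r ∈ Ioi R, u r = v r := by
  obtain ⟨C, hC0, hCf⟩ := f_lip hf hhom
  set c : ℝ := ‖θ‖ + 1 with hc_def
  have hc0 : 0 < c := by positivity
  -- ODE rearrangements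
  have hu2 : ∀ t ∈ Ioi R, u'' t = -((2/t) • u' t) - f (u t) := by
    intro t ht
    have h := huode t ht
    rw [add_assoc] at h
    rw [eq_neg_of_add_eq_zero_left h, neg_add]
    rfl
  have hv2 : ∀ t ∈ Ioi R, v'' t = -((2/t) • v' t) - f (v t) := by
    intro t ht
    have h := hvode t ht
    rw [add_assoc] at h
    rw [eq_neg_of_add_eq_zero_left h, neg_add]
    rfl
  -- the difference function z and its derivatives
  set z : ℝ → EuclideanSpace ℝ (Fin m) := fun t => t • (u t - v t) with hz_def
  set z' : ℝ → EuclideanSpace ℝ (Fin m) :=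
    fun t => (u t - v t) + t • (u' t - v' t) with hz'_def
  set z'' : ℝ → EuclideanSpace ℝ (Fin m) :=
    fun t => -(t • (f (u t) - f (v t))) with hz''_def
  have hdz : ∀ t ∈ Ioi R, HasDerivAt z (z' t) t := by
    intro t ht
    have h1 : HasDerivAt (fun s => u s - v s) (u' t - v' t) t :=
      (hud t ht).sub (hvd t ht)
    have := (hasDerivAt_id t).fun_smul h1
    simpa [hz_def, hz'_def, add_comm] using this
  have hdz' : ∀ t ∈ Ioi R, HasDerivAt z' (z'' t) t := by
    intro t ht
    have htpos : 0 < t := hR.trans ht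
    have h1 : HasDerivAt (fun s => u s - v s) (u' t - v' t) t :=
      (hud t ht).sub (hvd t ht)
    have h2 : HasDerivAt (fun s => u' s - v' s) (u'' t - v'' t) t :=
      (hud' t ht).sub (hvd' t ht)
    have h3 := h1.add ((hasDerivAt_id t).smul h2)
    simp only [id_eq] at h3
    have heq : (u' t - v' t) + (t • (u'' t - v'' t) + (1:ℝ) • (u' t - v' t)) = z'' t := by
      rw [hu2 t ht, hv2 t ht]
      simp only [hz''_def, one_smul]
      match_scalars
      all_goals field_simp
      all_goals ring
    rw [← heq]
    exact h3
  have hcz'' : ContinuousOn z'' (Ioi R) := by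
    have hcu : ContinuousOn u (Ioi R) :=
      fun t ht => (hud t ht).continuousAt.continuousWithinAt
    have hcv : ContinuousOn v (Ioi R) :=
      fun t ht => (hvd t ht).continuousAt.continuousWithinAt
    exact ((continuousOn_id.smul
      ((hf.continuous.comp_continuousOn hcu).sub
        (hf.continuous.comp_continuousOn hcv)))).neg
  have hzlim : Tendsto z atTop (nhds 0) := by
    have := hulim.sub hvlim
    rw [sub_self] at this
    refine this.congr fun t => ?_
    rw [hz_def]
    simp [smul_sub]
  -- eventual bounds and choice of ρ
  have hub : ∀ᶠ t in atTop, ‖t • u t‖ ≤ c := by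
    have hn := hulim.norm
    have := hn.eventually_le_const (show ‖θ‖ < c by rw [hc_def]; linarith)
    exact this
  have hvb : ∀ᶠ t in atTop, ‖t • v t‖ ≤ c := by
    have hn := hvlim.norm
    exact hn.eventually_le_const (show ‖θ‖ < c by rw [hc_def]; linarith)
  have hzb : ∀ᶠ t in atTop, ‖z t‖ ≤ 1 := by
    have hn := hzlim.norm
    rw [norm_zero] at hn
    exact hn.eventually_le_const one_pos
  obtain ⟨N, hN⟩ := eventually_atTop.mp ((hub.and hvb).and hzb)
  set ρ : ℝ := max (max (R + 1) 1) (max N (C * c ^ 4)) with hρ_def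
  have hρR : R < ρ := lt_of_lt_of_le (by linarith) ((le_max_left _ _).trans (le_max_left _ _))
  have hρ1 : 1 ≤ ρ := (le_max_right _ _).trans (le_max_left _ _)
  have hρN : N ≤ ρ := (le_max_left _ _).trans (le_max_right _ _)
  have hρC : C * c ^ 4 ≤ ρ := (le_max_right _ _).trans (le_max_right _ _)
  have hρ0 : 0 < ρ := lt_of_lt_of_le one_pos hρ1
  have hsub : Ici ρ ⊆ Ioi R := fun t ht => lt_of_lt_of_le hρR ht
  -- rpow to pow conversions
  have hr4 : ∀ s : ℝ, 0 < s → s ^ (-4 : ℝ) = (s ^ (4:ℕ))⁻¹ := by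
    intro s hs
    rw [← Real.rpow_natCast s 4, ← Real.rpow_neg hs.le]
    norm_num
  have hr2 : ∀ s : ℝ, 0 < s → s ^ (-2 : ℝ) = (s ^ (2:ℕ))⁻¹ := by
    intro s hs
    rw [← Real.rpow_natCast s 2, ← Real.rpow_neg hs.le]
    norm_num
  -- the z'' bound under a tail bound on z
  have hzbb : ∀ B : ℝ, 0 ≤ B → (∀ s ∈ Ici ρ, ‖z s‖ ≤ B) →
      ∀ s ∈ Ici ρ, ‖z'' s‖ ≤ (C * c ^ 4 * B) * s ^ (-4 : ℝ) := by
    intro B hB hzB s hs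
    have hsN : N ≤ s := hρN.trans hs
    obtain ⟨⟨hbu, hbv⟩, _⟩ := hN s hsN
    have hspos : 0 < s := hρ0.trans_le hs
    have hus : ‖u s‖ ≤ c / s := by
      rw [norm_smul, Real.norm_eq_abs, abs_of_pos hspos] at hbu
      rw [le_div_iff₀ hspos]; linarith
    have hvs : ‖v s‖ ≤ c / s := by
      rw [norm_smul, Real.norm_eq_abs, abs_of_pos hspos] at hbv
      rw [le_div_iff₀ hspos]; linarith
    have huvs : ‖u s - v s‖ ≤ B / s := by
      have h1 : ‖z s‖ = s * ‖u s - v s‖ := by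
        rw [hz_def]; simp [norm_smul, abs_of_pos hspos]
      rw [le_div_iff₀ hspos]
      have := hzB s hs
      rw [h1] at this
      linarith [this]
    have hcds : 0 ≤ c / s := le_of_lt (div_pos hc0 hspos)
    calc ‖z'' s‖ = s * ‖f (u s) - f (v s)‖ := by
          rw [hz''_def]; simp [norm_smul, abs_of_pos hspos]
      _ ≤ s * (C * (max ‖u s‖ ‖v s‖) ^ 4 * ‖u s - v s‖) := by
          exact mul_le_mul_of_nonneg_left (hCf (u s) (v s)) hspos.le
      _ ≤ s * (C * (c / s) ^ 4 * (B / s)) := by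
          have hmax : max ‖u s‖ ‖v s‖ ≤ c / s := max_le hus hvs
          have hmax0 : (0:ℝ) ≤ max ‖u s‖ ‖v s‖ := le_max_of_le_left (norm_nonneg _)
          gcongr
      _ = (C * c ^ 4 * B) * s ^ (-4 : ℝ) := by
          rw [hr4 s hspos]
          field_simp
  -- inductive decay
  have hind : ∀ n : ℕ, ∀ t ∈ Ici ρ, ‖z t‖ ≤ (1/2 : ℝ) ^ n := by
    intro n
    induction n with
    | zero =>
      intro t ht
      have hsN : N ≤ t := hρN.trans ht
      obtain ⟨_, hb3⟩ := hN t hsN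
      simpa using hb3
    | succ n ih =>
      have hD0 : (0:ℝ) ≤ C * c ^ 4 * (1/2 : ℝ) ^ n := by positivity
      have hdecay := decay_step hρ0 hD0
        (fun t ht => hdz t (hsub ht)) (fun t ht => hdz' t (hsub ht))
        (hcz''.mono hsub) hzlim
        (hzbb ((1/2 : ℝ) ^ n) (by positivity) ih)
      intro t ht
      have htpos : 0 < t := hρ0.trans_le ht
      have h1 := hdecay t ht
      rw [hr2 t htpos] at h1
      have h2 : (t ^ (2:ℕ))⁻¹ ≤ (ρ ^ (2:ℕ))⁻¹ := by
        gcongr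
        exact ht
      have h3 : C * c ^ 4 * (1/2:ℝ) ^ n * (t ^ (2:ℕ))⁻¹ / 6
          ≤ ρ * (1/2:ℝ) ^ n * (ρ ^ (2:ℕ))⁻¹ / 6 := by
        gcongr
      have h4 : ρ * (1/2:ℝ) ^ n * (ρ ^ (2:ℕ))⁻¹ / 6 = (1/2:ℝ) ^ n / (6 * ρ) := by
        field_simp
      have h5 : (1/2:ℝ) ^ n / (6 * ρ) ≤ (1/2:ℝ) ^ n / 2 := by
        gcongr
        · linarith
      calc ‖z t‖ ≤ C * c ^ 4 * (1/2:ℝ) ^ n * (t ^ (2:ℕ))⁻¹ / 6 := h1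
        _ ≤ (1/2:ℝ) ^ n / (6 * ρ) := by rw [← h4]; exact h3
        _ ≤ (1/2:ℝ) ^ n / 2 := h5
        _ = (1/2:ℝ) ^ (n+1) := by ring
  -- z vanishes on [ρ, ∞)
  have hz0 : ∀ t ∈ Ici ρ, z t = 0 := by
    intro t ht
    have hlim : Tendsto (fun n : ℕ => (1/2 : ℝ) ^ n) atTop (nhds 0) :=
      tendsto_pow_atTop_nhds_zero_of_lt_one (by norm_num) (by norm_num)
    have : ‖z t‖ ≤ 0 := ge_of_tendsto' hlim (fun n => hind n t ht)
    simpa using le_antisymm this (norm_nonneg _)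
  have huv0 : ∀ t ∈ Ici ρ, u t = v t := by
    intro t ht
    have htpos : 0 < t := hρ0.trans_le ht
    have := hz0 t ht
    rw [hz_def] at this
    simp only [smul_eq_zero] at this
    rcases this with h | h
    · exact absurd h htpos.ne'
    · exact sub_eq_zero.mp h
  -- derivative matching at t2 = ρ + 1
  set t2 : ℝ := ρ + 1 with ht2_def
  have ht2ρ : t2 ∈ Ici ρ := by rw [ht2_def]; simp [mem_Ici]
  have ht2R : t2 ∈ Ioi R := hsub ht2ρ
  have hz't2 : z' t2 = 0 := by
    have h1 : HasDerivAt z (0 : EuclideanSpace ℝ (Fin m)) t2 := by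
      refine (hasDerivAt_const t2 (0 : EuclideanSpace ℝ (Fin m))).congr_of_eventuallyEq ?_
      have hmem : Ioi ρ ∈ nhds t2 := Ioi_mem_nhds (by rw [ht2_def]; linarith)
      filter_upwards [hmem] with s hs
      exact hz0 s (mem_Ici.mpr (le_of_lt hs))
    exact (hdz t2 ht2R).unique h1
  have hu'v2 : u' t2 = v' t2 := by
    have h1 := hz't2
    rw [hz'_def] at h1
    simp only at h1
    rw [huv0 t2 ht2ρ, sub_self, zero_add] at h1
    have ht2pos : (0:ℝ) < t2 := by rw [ht2_def]; linarith
    rcases smul_eq_zero.mp h1 with h | h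
    · exact absurd h ht2pos.ne'
    · exact sub_eq_zero.mp h
  -- backward uniqueness via the first-order system
  intro r hr
  rcases le_or_gt ρ r with hcase | hcase
  · exact huv0 r hcase
  -- now r < ρ < t2
  have hrt2 : r < t2 := by rw [ht2_def]; linarith
  have hIccsub : Icc r t2 ⊆ Ioi R := fun s hs => lt_of_lt_of_le hr hs.1
  set U : ℝ → EuclideanSpace ℝ (Fin m) × EuclideanSpace ℝ (Fin m) :=
    fun t => (u t, u' t) with hU_def
  set V : ℝ → EuclideanSpace ℝ (Fin m) × EuclideanSpace ℝ (Fin m) :=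
    fun t => (v t, v' t) with hV_def
  have hUc : ContinuousOn U (Icc r t2) := fun t ht =>
    ((hud t (hIccsub ht)).continuousAt.prodMk (hud' t (hIccsub ht)).continuousAt).continuousWithinAt
  have hVc : ContinuousOn V (Icc r t2) := fun t ht =>
    ((hvd t (hIccsub ht)).continuousAt.prodMk (hvd' t (hIccsub ht)).continuousAt).continuousWithinAt
  obtain ⟨Bu, hBu⟩ := isCompact_Icc.exists_bound_of_continuousOn hUc
  obtain ⟨Bv, hBv⟩ := isCompact_Icc.exists_bound_of_continuousOn hVc
  set Bb : ℝ := max (max Bu Bv) 0 with hBb_def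
  have hBb0 : 0 ≤ Bb := le_max_right _ _
  set F : ℝ → (EuclideanSpace ℝ (Fin m) × EuclideanSpace ℝ (Fin m)) →
      (EuclideanSpace ℝ (Fin m) × EuclideanSpace ℝ (Fin m)) :=
    fun t p => (p.2, -((2/t) • p.2) - f p.1) with hF_def
  set sfun : ℝ → Set (EuclideanSpace ℝ (Fin m) × EuclideanSpace ℝ (Fin m)) :=
    fun t => if t ∈ Icc r t2 then Metric.closedBall 0 Bb else ∅ with hs_def
  set Kr : ℝ := 1 + 2/R + C * Bb ^ 4 with hKr_def
  have hKr0 : 0 ≤ Kr := by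
    rw [hKr_def]
    have : 0 < 2/R := by positivity
    positivity
  have hlip : ∀ t, LipschitzOnWith (Real.toNNReal Kr) (F t) (sfun t) := by
    intro t
    simp only [hs_def]
    by_cases hmem : t ∈ Icc r t2
    · rw [if_pos hmem]
      have htR : R < t := lt_of_lt_of_le hr hmem.1
      have htpos : 0 < t := hR.trans htR
      apply LipschitzOnWith.of_dist_le_mul
      intro p hp q hq
      rw [Metric.mem_closedBall, dist_zero_right] at hp hq
      have hp1 : ‖p.1‖ ≤ Bb := (norm_fst_le p).trans hp
      have hq1 : ‖q.1‖ ≤ Bb := (norm_fst_le q).trans hq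
      have hd1 : ‖p.1 - q.1‖ ≤ dist p q := by
        rw [dist_eq_norm]
        exact norm_fst_le (p - q)
      have hd2 : ‖p.2 - q.2‖ ≤ dist p q := by
        rw [dist_eq_norm]
        exact norm_snd_le (p - q)
      have hdist0 : 0 ≤ dist p q := dist_nonneg
      have hsecond : dist (F t p).2 (F t q).2 ≤ (2/R + C * Bb ^ 4) * dist p q := by
        simp only [hF_def]
        rw [dist_eq_norm]
        have heq : (-((2/t) • p.2) - f p.1) - (-((2/t) • q.2) - f q.1)
            = -((2/t) • (p.2 - q.2)) - (f p.1 - f q.1) := by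
          rw [smul_sub]; abel
        rw [heq]
        have hA : ‖(2/t) • (p.2 - q.2)‖ ≤ (2/R) * dist p q := by
          rw [norm_smul, Real.norm_eq_abs, abs_of_pos (by positivity : (0:ℝ) < 2/t)]
          have h1 : 2/t ≤ 2/R := by
            apply div_le_div_of_nonneg_left (by norm_num) hR (le_of_lt htR)
          exact mul_le_mul h1 hd2 (norm_nonneg _) (by positivity)
        have hB : ‖f p.1 - f q.1‖ ≤ C * Bb ^ 4 * dist p q := by
          refine (hCf p.1 q.1).trans ?_
          have hmx : max ‖p.1‖ ‖q.1‖ ≤ Bb := max_le hp1 hq1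
          have hmx0 : (0:ℝ) ≤ max ‖p.1‖ ‖q.1‖ := le_max_of_le_left (norm_nonneg _)
          have h2 : (max ‖p.1‖ ‖q.1‖) ^ 4 ≤ Bb ^ 4 := pow_le_pow_left₀ hmx0 hmx 4
          exact mul_le_mul (mul_le_mul le_rfl h2 (by positivity) hC0)
            hd1 (norm_nonneg _) (by positivity)
        calc ‖-((2/t) • (p.2 - q.2)) - (f p.1 - f q.1)‖
            ≤ ‖(2/t) • (p.2 - q.2)‖ + ‖f p.1 - f q.1‖ := by
              rw [sub_eq_add_neg]
              refine (norm_add_le _ _).trans ?_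
              rw [norm_neg, norm_neg]
          _ ≤ (2/R) * dist p q + C * Bb ^ 4 * dist p q := add_le_add hA hB
          _ = (2/R + C * Bb ^ 4) * dist p q := by ring
      have hfirst : dist (F t p).1 (F t q).1 ≤ dist p q := by
        simp only [hF_def]
        simpa [dist_eq_norm] using hd2
      have hcoe : (Real.toNNReal Kr : ℝ) = Kr := Real.coe_toNNReal Kr hKr0
      rw [hcoe, Prod.dist_eq]
      have hKr1 : 1 ≤ Kr := by
        rw [hKr_def]
        have h2R : 0 < 2/R := by positivity
        have hCB : 0 ≤ C * Bb ^ 4 := by positivity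
        linarith
      refine max_le ?_ ?_
      · exact hfirst.trans (le_mul_of_one_le_left hdist0 hKr1)
      · refine hsecond.trans (mul_le_mul_of_nonneg_right ?_ hdist0)
        rw [hKr_def]
        linarith
    · rw [if_neg hmem]
      exact lipschitzOnWith_empty _ _
  have hU' : ∀ t ∈ Ioc r t2, HasDerivWithinAt U (F t (U t)) (Iic t) t := by
    intro t ht
    have htR : t ∈ Ioi R := lt_of_lt_of_le hr ht.1.le
    have h1 : HasDerivAt U (u' t, u'' t) t := (hud t htR).prodMk (hud' t htR)
    have h2 : (u' t, u'' t) = F t (U t) := by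
      rw [hF_def, hU_def]
      simp only
      rw [hu2 t htR]
    exact (h2 ▸ h1).hasDerivWithinAt
  have hV' : ∀ t ∈ Ioc r t2, HasDerivWithinAt V (F t (V t)) (Iic t) t := by
    intro t ht
    have htR : t ∈ Ioi R := lt_of_lt_of_le hr ht.1.le
    have h1 : HasDerivAt V (v' t, v'' t) t := (hvd t htR).prodMk (hvd' t htR)
    have h2 : (v' t, v'' t) = F t (V t) := by
      rw [hF_def, hV_def]
      simp only
      rw [hv2 t htR]
    exact (h2 ▸ h1).hasDerivWithinAt
  have hUs : ∀ t ∈ Ioc r t2, U t ∈ sfun t := by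
    intro t ht
    simp only [hs_def]
    rw [if_pos (Ioc_subset_Icc_self ht)]
    rw [Metric.mem_closedBall, dist_zero_right]
    exact (hBu t (Ioc_subset_Icc_self ht)).trans ((le_max_left _ _).trans (le_max_left _ _))
  have hVs : ∀ t ∈ Ioc r t2, V t ∈ sfun t := by
    intro t ht
    simp only [hs_def]
    rw [if_pos (Ioc_subset_Icc_self ht)]
    rw [Metric.mem_closedBall, dist_zero_right]
    exact (hBv t (Ioc_subset_Icc_self ht)).trans ((le_max_right _ _).trans (le_max_left _ _))
  have heq2 : U t2 = V t2 := by
    rw [hU_def, hV_def]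
    simp only
    rw [huv0 t2 ht2ρ, hu'v2]
  have hres := ODE_solution_unique_of_mem_Icc_left (fun t _ => hlip t) hUc hU' hUs hVc hV' hVs heq2
  have := hres (left_mem_Icc.mpr hrt2.le)
  rw [hU_def, hV_def] at this
  exact congrArg Prod.fst this
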